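/- If the input u^d of length T is persistently exciting of order L+n and the data is generated by a controllable minimal LTI system of state dimension n, then the Hankel matrix H_L(col(u^d,y^d)) has rank exactly Lm + n. -/

import Mathlib

open Matrix Finset

/-- Block Hankel matrix of depth `L` with `cols` columns. -/
def hankel {m : ℕ} (u : ℕ → Fin m → ℝ) (L cols : ℕ) :
    Matrix (Fin L × Fin m) (Fin cols) ℝ :=
  fun ia j => u ((ia.1 : ℕ) + (j : ℕ)) ia.2

/-- Extended observability matrix. -/
def obsMat {n p : ℕ} (A : Matrix (Fin n) (Fin n) ℝ) (C : Matrix (Fin p) (Fin n) ℝ)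
    (L : ℕ) : Matrix (Fin L × Fin p) (Fin n) ℝ :=
  fun ip j => (C * A ^ (ip.1 : ℕ)) ip.2 j

/-- Controllability matrix `[B, AB, ..., A^{n-1} B]`. -/
def ctrbMat {n m : ℕ} (A : Matrix (Fin n) (Fin n) ℝ) (B : Matrix (Fin n) (Fin m) ℝ) :
    Matrix (Fin n) (Fin n × Fin m) ℝ :=
  fun i km => (A ^ (km.1 : ℕ) * B) i km.2

set_option linter.unusedSectionVars false
section rankAux
variable {α β γ : Type*} [Fintype α] [Fintype β] [Fintype γ]

lemma rank_eq_card_of_inj (M : Matrix α β ℝ) (h : Function.Injective M.mulVecLin) :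
    M.rank = Fintype.card β := by
  have h2 := LinearMap.finrank_range_add_finrank_ker M.mulVecLin
  rw [LinearMap.ker_eq_bot.mpr h] at h2
  simpa [Matrix.rank, Module.finrank_fintype_fun_eq_card] using h2

lemma inj_of_rank_eq_card (M : Matrix α β ℝ) (h : M.rank = Fintype.card β) :
    Function.Injective M.mulVecLin := by
  rw [← LinearMap.ker_eq_bot, ← Submodule.finrank_eq_zero]
  have h2 := LinearMap.finrank_range_add_finrank_ker M.mulVecLin
  rw [Matrix.rank] at h
  rw [h, Module.finrank_fintype_fun_eq_card] at h2
  omega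

lemma surj_of_rank_eq_card (M : Matrix α β ℝ) (h : M.rank = Fintype.card α) :
    Function.Surjective M.mulVecLin := by
  rw [← LinearMap.range_eq_top]
  apply Submodule.eq_top_of_finrank_eq
  rw [Matrix.rank] at h
  rw [h, Module.finrank_fintype_fun_eq_card]

lemma rank_mul_of_surj (M : Matrix α β ℝ) (N : Matrix β γ ℝ)
    (h : Function.Surjective N.mulVecLin) : (M * N).rank = M.rank := by
  unfold Matrix.rank
  rw [Matrix.mulVecLin_mul, LinearMap.range_comp, LinearMap.range_eq_top.mpr h,
    Submodule.map_top]

lemma vecMul_eq_zero_of_rank {M : Matrix α β ℝ} (h : M.rank = Fintype.card α)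
    {v : α → ℝ} (hv : v ᵥ* M = 0) : v = 0 := by
  have hr : (Mᵀ).rank = Fintype.card α := by rwa [Matrix.rank_transpose]
  have hinj := inj_of_rank_eq_card Mᵀ hr
  have : Mᵀ.mulVecLin v = Mᵀ.mulVecLin 0 := by
    simp [Matrix.mulVecLin_apply, Matrix.mulVec_transpose, hv]
  exact hinj this

end rankAux

lemma state_formula {n m : ℕ} (A : Matrix (Fin n) (Fin n) ℝ) (B : Matrix (Fin n) (Fin m) ℝ)
    (x : ℕ → Fin n → ℝ) (ud : ℕ → Fin m → ℝ)
    (hx : ∀ t, x (t + 1) = A.mulVec (x t) + B.mulVec (ud t)) (j k : ℕ) :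
    x (j + k) = (A ^ k).mulVec (x j)
      + ∑ i ∈ Finset.range k, (A ^ (k - 1 - i) * B).mulVec (ud (j + i)) := by
  induction k with
  | zero => simp
  | succ k ih =>
    have h1 : j + (k + 1) = (j + k) + 1 := by ring
    rw [h1, hx, ih, Finset.sum_range_succ]
    rw [Matrix.mulVec_add]
    have hAsum : A.mulVec (∑ i ∈ Finset.range k, (A ^ (k - 1 - i) * B).mulVec (ud (j + i)))
        = ∑ i ∈ Finset.range k, (A ^ (k + 1 - 1 - i) * B).mulVec (ud (j + i)) := by
      simp only [← Matrix.mulVecLin_apply, map_sum]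
      apply Finset.sum_congr rfl
      intro i hi
      rw [Finset.mem_range] at hi
      simp only [Matrix.mulVecLin_apply, Matrix.mulVec_mulVec]
      have h2 : A * (A ^ (k - 1 - i) * B) = A ^ (k + 1 - 1 - i) * B := by
        rw [← Matrix.mul_assoc, ← pow_succ']
        congr 2
        omega
      rw [h2]
    rw [hAsum, Matrix.mulVec_mulVec, ← pow_succ']
    have h3 : A ^ (k + 1 - 1 - k) * B = B := by
      have : k + 1 - 1 - k = 0 := by omega
      rw [this, pow_zero, Matrix.one_mul]
    rw [h3]
    abel

lemma ch_sum {n : ℕ} (A : Matrix (Fin n) (Fin n) ℝ) :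
    ∑ k ∈ Finset.range (n + 1), A.charpoly.coeff k • A ^ k = 0 := by
  have h := A.aeval_self_charpoly
  rw [Polynomial.aeval_eq_sum_range' (n := n + 1) (by simp) A] at h
  exact h

lemma ch_top {n : ℕ} (A : Matrix (Fin n) (Fin n) ℝ) : A.charpoly.coeff n = 1 := by
  have hm := A.charpoly_monic
  have hd : A.charpoly.natDegree = n := by simp
  rw [Polynomial.Monic, Polynomial.leadingCoeff, hd] at hm
  exact hm


lemma sum_mulVec' {ι n' m' : Type*} [Fintype n'] [Fintype m'] (s : Finset ι)
    (M : ι → Matrix n' m' ℝ) (v : m' → ℝ) :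
    (∑ i ∈ s, M i).mulVec v = ∑ i ∈ s, (M i).mulVec v := by
  ext r
  simp [Matrix.mulVec, dotProduct, Finset.sum_apply, Matrix.sum_apply, Finset.sum_mul]
  rw [Finset.sum_comm]

lemma dot_sum {ι α : Type*} [Fintype α] (s : Finset ι) (f : ι → α → ℝ) (v : α → ℝ) :
    v ⬝ᵥ (∑ i ∈ s, f i) = ∑ i ∈ s, v ⬝ᵥ f i := by
  simp [dotProduct, Finset.mul_sum]
  rw [Finset.sum_comm]

lemma N_full_rank {n m T L : ℕ}
    (A : Matrix (Fin n) (Fin n) ℝ) (B : Matrix (Fin n) (Fin m) ℝ)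
    (hctrb : (ctrbMat A B).rank = n)
    (x : ℕ → Fin n → ℝ) (ud : ℕ → Fin m → ℝ)
    (hx : ∀ t, x (t + 1) = A.mulVec (x t) + B.mulVec (ud t))
    (hpe : (hankel ud (L + n) (T - (L + n) + 1)).rank = (L + n) * m)
    (hLT : L + n ≤ T)
    (v : (Fin L × Fin m) ⊕ (Fin n) → ℝ)
    (hv : v ᵥ* (Matrix.of fun i (j : Fin (T - L + 1)) =>
        Sum.elim (fun tm : Fin L × Fin m => ud ((tm.1 : ℕ) + (j : ℕ)) tm.2)
          (fun r => x (j : ℕ) r) i) = 0) :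
    v = 0 := by
  classical
  set η : ℕ → Fin m → ℝ := fun s q => if h : s < L then v (Sum.inl (⟨s, h⟩, q)) else 0 with hηdef
  set ξ : Fin n → ℝ := fun r => v (Sum.inr r) with hξdef
  set a : ℕ → ℝ := fun k => A.charpoly.coeff k with hadef
  have hη : ∀ (t : Fin L) (q : Fin m), η (t : ℕ) q = v (Sum.inl (t, q)) := by
    intro t q
    simp [hηdef, t.isLt]
  -- the defining relation, in ℕ-indexed form
  have hv' : ∀ j : ℕ, j ≤ T - L →
      (∑ s ∈ Finset.range L, ∑ q, η s q * ud (s + j) q) + ξ ⬝ᵥ x j = 0 := by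
    intro j hj
    have hcol := congrFun hv ⟨j, by omega⟩
    simp only [Matrix.vecMul, dotProduct, Matrix.of_apply, Pi.zero_apply,
      Fintype.sum_sum_type, Sum.elim_inl, Sum.elim_inr, Fintype.sum_prod_type] at hcol
    rw [← hcol]
    congr 1
    rw [← Fin.sum_univ_eq_sum_range (fun s => ∑ q, η s q * ud (s + j) q) L]
    apply Finset.sum_congr rfl
    intro t _
    apply Finset.sum_congr rfl
    intro q _
    rw [hη]
  -- key identity for each power k ≤ n
  have key1 : ∀ k ≤ n, ∀ j, j ≤ T - L - n →
      (∑ s ∈ Finset.range k, (ξ ᵥ* (A ^ (k - 1 - s) * B)) ⬝ᵥ ud (j + s))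
        + (∑ s ∈ Finset.range L, ∑ q, η s q * ud (s + (j + k)) q)
        + (ξ ᵥ* (A ^ k)) ⬝ᵥ x j = 0 := by
    intro k hk j hj
    have hjk : j + k ≤ T - L := by omega
    have h0 := hv' (j + k) hjk
    rw [state_formula A B x ud hx j k] at h0
    rw [dotProduct_add, dot_sum] at h0
    have e1 : ∀ s, ξ ⬝ᵥ ((A ^ (k - 1 - s) * B).mulVec (ud (j + s)))
        = (ξ ᵥ* (A ^ (k - 1 - s) * B)) ⬝ᵥ ud (j + s) := fun s =>
      Matrix.dotProduct_mulVec _ _ _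
    have e2 : ξ ⬝ᵥ ((A ^ k).mulVec (x j)) = (ξ ᵥ* (A ^ k)) ⬝ᵥ x j :=
      Matrix.dotProduct_mulVec _ _ _
    simp only [e1, e2] at h0
    linarith [h0]
  -- the annihilating row vector for the deep Hankel matrix
  set w : ℕ → Fin m → ℝ := fun s q => ∑ k ∈ Finset.range (n + 1),
      a k * (if s < k then (ξ ᵥ* (A ^ (k - 1 - s) * B)) q
        else if s < k + L then η (s - k) q else 0) with hwdef
  have claimW : ∀ j, j ≤ T - L - n →
      ∑ s ∈ Finset.range (L + n), ∑ q, w s q * ud (s + j) q = 0 := by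
    intro j hj
    have swap : ∑ s ∈ Finset.range (L + n), ∑ q, w s q * ud (s + j) q
        = ∑ k ∈ Finset.range (n + 1), a k *
          (∑ s ∈ Finset.range (L + n), ∑ q,
            (if s < k then (ξ ᵥ* (A ^ (k - 1 - s) * B)) q
              else if s < k + L then η (s - k) q else 0) * ud (s + j) q) := by
      have h1 : ∀ s, ∀ q : Fin m, w s q * ud (s + j) q
          = ∑ k ∈ Finset.range (n + 1), a k *
            ((if s < k then (ξ ᵥ* (A ^ (k - 1 - s) * B)) q
              else if s < k + L then η (s - k) q else 0) * ud (s + j) q) := by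
        intro s q
        rw [hwdef]
        simp only [Finset.sum_mul, mul_assoc]
      simp only [h1]
      rw [Finset.sum_congr rfl (fun s _ => Finset.sum_comm), Finset.sum_comm]
      apply Finset.sum_congr rfl; intro k _
      rw [Finset.mul_sum]
      apply Finset.sum_congr rfl; intro s _
      rw [Finset.mul_sum]
    rw [swap]
    have bracket : ∀ k ∈ Finset.range (n + 1),
        (∑ s ∈ Finset.range (L + n), ∑ q,
            (if s < k then (ξ ᵥ* (A ^ (k - 1 - s) * B)) q
              else if s < k + L then η (s - k) q else 0) * ud (s + j) q)
        = -((ξ ᵥ* (A ^ k)) ⬝ᵥ x j) := by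
      intro k hk
      rw [Finset.mem_range] at hk
      have hk' : k ≤ n := by omega
      rw [← Finset.sum_range_add_sum_Ico _ (show k ≤ L + n by omega),
        ← Finset.sum_Ico_consecutive _ (show k ≤ k + L by omega) (show k + L ≤ L + n by omega)]
      have p1 : ∑ s ∈ Finset.range k, ∑ q,
          (if s < k then (ξ ᵥ* (A ^ (k - 1 - s) * B)) q
            else if s < k + L then η (s - k) q else 0) * ud (s + j) q
          = ∑ s ∈ Finset.range k, (ξ ᵥ* (A ^ (k - 1 - s) * B)) ⬝ᵥ ud (j + s) := by
        apply Finset.sum_congr rfl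
        intro s hs
        rw [Finset.mem_range] at hs
        have : j + s = s + j := by omega
        rw [this]
        apply Finset.sum_congr rfl
        intro q _
        rw [if_pos hs]
      have p2 : ∑ s ∈ Finset.Ico k (k + L), ∑ q,
          (if s < k then (ξ ᵥ* (A ^ (k - 1 - s) * B)) q
            else if s < k + L then η (s - k) q else 0) * ud (s + j) q
          = ∑ s ∈ Finset.range L, ∑ q, η s q * ud (s + (j + k)) q := by
        rw [Finset.sum_Ico_eq_sum_range]
        have : k + L - k = L := by omega
        rw [this]
        apply Finset.sum_congr rfl
        intro s hs
        rw [Finset.mem_range] at hs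
        have e1 : k + s + j = s + (j + k) := by omega
        rw [e1]
        apply Finset.sum_congr rfl
        intro q _
        rw [if_neg (by omega), if_pos (by omega)]
        congr 2
        omega
      have p3 : ∑ s ∈ Finset.Ico (k + L) (L + n), ∑ q,
          (if s < k then (ξ ᵥ* (A ^ (k - 1 - s) * B)) q
            else if s < k + L then η (s - k) q else 0) * ud (s + j) q = 0 := by
        apply Finset.sum_eq_zero
        intro s hs
        rw [Finset.mem_Ico] at hs
        apply Finset.sum_eq_zero
        intro q _
        rw [if_neg (by omega), if_neg (by omega), zero_mul]
      rw [p1, p2, p3, add_zero]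
      have := key1 k hk' j hj
      linarith [this]
    rw [Finset.sum_congr rfl (fun k hk => by rw [bracket k hk])]
    have final : ∑ k ∈ Finset.range (n + 1), a k * -((ξ ᵥ* (A ^ k)) ⬝ᵥ x j) = 0 := by
      have e : ∀ k, a k * -((ξ ᵥ* (A ^ k)) ⬝ᵥ x j)
          = -(ξ ⬝ᵥ ((a k • A ^ k).mulVec (x j))) := by
        intro k
        rw [Matrix.smul_mulVec, dotProduct_smul, Matrix.dotProduct_mulVec,
          smul_eq_mul, mul_neg]
      simp only [e]
      rw [Finset.sum_neg_distrib, ← dot_sum]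
      rw [← sum_mulVec', ch_sum, Matrix.zero_mulVec, dotProduct_zero, neg_zero]
    exact final
  -- persistency of excitation kills w
  have w0 : ∀ s, s < L + n → ∀ q, w s q = 0 := by
    have hcard : (hankel ud (L + n) (T - (L + n) + 1)).rank
        = Fintype.card (Fin (L + n) × Fin m) := by
      rw [hpe]; simp
    have hW : (fun sq : Fin (L + n) × Fin m => w (sq.1 : ℕ) sq.2)
        ᵥ* hankel ud (L + n) (T - (L + n) + 1) = 0 := by
      funext j
      have hjle : (j : ℕ) ≤ T - L - n := by
        have := j.isLt
        omega
      have hc := claimW (j : ℕ) hjle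
      simp only [Matrix.vecMul, dotProduct, Fintype.sum_prod_type, Pi.zero_apply]
      rw [← hc]
      rw [← Fin.sum_univ_eq_sum_range (fun s => ∑ q, w s q * ud (s + (j : ℕ)) q) (L + n)]
      rfl
    have := vecMul_eq_zero_of_rank hcard hW
    intro s hs q
    exact congrFun this (⟨s, hs⟩, q)
  have an1 : a n = 1 := ch_top A
  -- step 1 : η vanishes
  have ηind : ∀ i : ℕ, ∀ t q, L - i ≤ t → η t q = 0 := by
    intro i
    induction i with
    | zero =>
      intro t q ht
      simp only [hηdef]
      rw [dif_neg (by omega)]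
    | succ i ih =>
      intro t q ht
      by_cases hL : L ≤ t
      · simp only [hηdef]; rw [dif_neg (by omega)]
      by_cases hLi : L - i ≤ t
      · exact ih t q hLi
      -- now t + 1 = L - i, t < L
      have hw := w0 (n + t) (by omega) q
      simp only [hwdef] at hw
      rw [Finset.sum_range_succ] at hw
      have hz : ∑ k ∈ Finset.range n, a k *
          (if n + t < k then (ξ ᵥ* (A ^ (k - 1 - (n + t)) * B)) q
            else if n + t < k + L then η (n + t - k) q else 0) = 0 := by
        apply Finset.sum_eq_zero
        intro k hkk
        rw [Finset.mem_range] at hkk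
        rw [if_neg (by omega)]
        by_cases hcc : n + t < k + L
        · rw [if_pos hcc, ih (n + t - k) q (by omega), mul_zero]
        · rw [if_neg hcc, mul_zero]
      rw [hz, zero_add, if_neg (by omega), if_pos (by omega), an1, one_mul] at hw
      have : n + t - n = t := by omega
      rwa [this] at hw
  have ηz : ∀ t q, η t q = 0 := fun t q => ηind L t q (by omega)
  -- step 2 : ξᵀ A^d B vanishes
  have ξB : ∀ d, d < n → ξ ᵥ* (A ^ d * B) = 0 := by
    intro d
    induction d using Nat.strong_induction_on with
    | _ d ih =>
      intro hd
      funext q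
      have hw := w0 (n - 1 - d) (by omega) q
      simp only [hwdef] at hw
      rw [Finset.sum_range_succ] at hw
      have hz : ∑ k ∈ Finset.range n, a k *
          (if n - 1 - d < k then (ξ ᵥ* (A ^ (k - 1 - (n - 1 - d)) * B)) q
            else if n - 1 - d < k + L then η (n - 1 - d - k) q else 0) = 0 := by
        apply Finset.sum_eq_zero
        intro k hkk
        rw [Finset.mem_range] at hkk
        by_cases hlt : n - 1 - d < k
        · rw [if_pos hlt]
          have hke : k - 1 - (n - 1 - d) < d := by omega
          rw [ih _ hke (by omega)]
          simp
        · rw [if_neg hlt]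
          by_cases hcc : n - 1 - d < k + L
          · rw [if_pos hcc, ηz, mul_zero]
          · rw [if_neg hcc, mul_zero]
      rw [hz, zero_add, if_pos (by omega), an1, one_mul] at hw
      have he : n - 1 - (n - 1 - d) = d := by omega
      rw [he] at hw
      simpa using hw
  -- ξ = 0 by controllability
  have hξv : ξ ᵥ* ctrbMat A B = 0 := by
    funext km
    have := congrFun (ξB (km.1 : ℕ) km.1.isLt) km.2
    simpa [Matrix.vecMul, dotProduct, ctrbMat] using this
  have hcardc : (ctrbMat A B).rank = Fintype.card (Fin n) := by rw [hctrb]; simp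
  have hξ0 : ξ = 0 := vecMul_eq_zero_of_rank hcardc hξv
  -- conclude
  funext i
  cases i with
  | inl tq =>
    have := hη tq.1 tq.2
    rw [ηz] at this
    simp [← this]
  | inr r => simpa [hξdef] using congrFun hξ0 r


section main
variable {n m p T L : ℕ}
  (A : Matrix (Fin n) (Fin n) ℝ) (B : Matrix (Fin n) (Fin m) ℝ)
  (C : Matrix (Fin p) (Fin n) ℝ) (D : Matrix (Fin p) (Fin m) ℝ)

/-- the combined `[I 0; T O]` matrix -/
noncomputable def Mmat : Matrix ((Fin L × Fin m) ⊕ (Fin L × Fin p)) ((Fin L × Fin m) ⊕ Fin n) ℝ :=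
  fun i jj =>
    match i, jj with
    | .inl a, .inl b => if a = b then (1 : ℝ) else 0
    | .inl _, .inr _ => 0
    | .inr tp, .inl t'q =>
        if (t'q.1 : ℕ) < (tp.1 : ℕ) then (C * A ^ ((tp.1 : ℕ) - 1 - (t'q.1 : ℕ)) * B) tp.2 t'q.2
        else if (t'q.1 : ℕ) = (tp.1 : ℕ) then D tp.2 t'q.2 else 0
    | .inr tp, .inr r => (C * A ^ (tp.1 : ℕ)) tp.2 r

lemma Mmat_inj (hobsL : (obsMat A C L).rank = n) :
    Function.Injective (Mmat A B C D (L := L)).mulVecLin := by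
  rw [injective_iff_map_eq_zero]
  intro v hv0
  have hl : ∀ a : Fin L × Fin m, v (Sum.inl a) = 0 := by
    intro a
    have h := congrFun hv0 (Sum.inl a)
    simp only [Matrix.mulVecLin_apply, Matrix.mulVec, dotProduct,
      Fintype.sum_sum_type, Pi.zero_apply, Mmat] at h
    rw [← h]
    simp [Finset.sum_ite_eq, ite_mul]
  have hr : (obsMat A C L).mulVec (fun r => v (Sum.inr r)) = 0 := by
    funext tp
    have h := congrFun hv0 (Sum.inr tp)
    simp only [Matrix.mulVecLin_apply, Matrix.mulVec, dotProduct,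
      Fintype.sum_sum_type, Pi.zero_apply, Mmat] at h
    simp only [hl, mul_zero, Finset.sum_const_zero, zero_add] at h
    simpa [Matrix.mulVec, dotProduct, obsMat] using h
  have hinj := inj_of_rank_eq_card (obsMat A C L) (by rw [hobsL]; simp)
  have : (fun r => v (Sum.inr r)) = 0 := by
    apply hinj
    simpa [Matrix.mulVecLin_apply] using hr
  funext i
  cases i with
  | inl a => exact hl a
  | inr r => exact congrFun this r

lemma sum_mulVec'' {ι n' m' : Type*} [Fintype n'] [Fintype m'] (s : Finset ι)
    (M : Matrix n' m' ℝ) (f : ι → m' → ℝ) :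
    M.mulVec (∑ i ∈ s, f i) = ∑ i ∈ s, M.mulVec (f i) := by
  simp only [← Matrix.mulVecLin_apply, map_sum]

lemma fact (x : ℕ → Fin n → ℝ) (ud : ℕ → Fin m → ℝ) (yd : ℕ → Fin p → ℝ)
    (hx : ∀ t, x (t + 1) = A.mulVec (x t) + B.mulVec (ud t))
    (hy : ∀ t, yd t = C.mulVec (x t) + D.mulVec (ud t)) :
    (Matrix.of fun (i : (Fin L × Fin m) ⊕ (Fin L × Fin p)) (j : Fin (T - L + 1)) =>
        Sum.elim (fun tm => ud ((tm.1 : ℕ) + (j : ℕ)) tm.2)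
          (fun tp => yd ((tp.1 : ℕ) + (j : ℕ)) tp.2) i)
      = Mmat A B C D (L := L) * (Matrix.of fun i (j : Fin (T - L + 1)) =>
          Sum.elim (fun tm : Fin L × Fin m => ud ((tm.1 : ℕ) + (j : ℕ)) tm.2)
            (fun r => x (j : ℕ) r) i) := by
  funext i j
  cases i with
  | inl tq =>
    rw [Matrix.mul_apply, Fintype.sum_sum_type]
    simp only [Matrix.of_apply, Sum.elim_inl, Sum.elim_inr, Mmat]
    rw [Finset.sum_eq_single tq]
    · simp
    · intro b _ hb
      simp [Ne.symm hb]
    · simp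
  | inr tp =>
    obtain ⟨t, pp⟩ := tp
    have hxe : x ((t : ℕ) + (j : ℕ)) = (A ^ (t : ℕ)).mulVec (x (j : ℕ))
        + ∑ s ∈ Finset.range (t : ℕ), (A ^ ((t : ℕ) - 1 - s) * B).mulVec (ud ((j : ℕ) + s)) := by
      rw [add_comm ((t : ℕ)) ((j : ℕ))]
      exact state_formula A B x ud hx _ _
    rw [Matrix.mul_apply, Fintype.sum_sum_type]
    simp only [Matrix.of_apply, Sum.elim_inl, Sum.elim_inr, Mmat]
    rw [hy, Pi.add_apply, hxe, Matrix.mulVec_add, sum_mulVec'']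
    simp only [Matrix.mulVec_mulVec, Pi.add_apply, Finset.sum_apply, ← Matrix.mul_assoc]
    -- LHS : ((C*A^t) *ᵥ x j) pp + ∑ s∈range t, ((C*A^{t-1-s}*B) *ᵥ ud (j+s)) pp + (D *ᵥ ud (t+j)) pp
    have hsum1 : ∑ b : Fin L × Fin m,
        (if (b.1 : ℕ) < (t : ℕ) then (C * A ^ ((t : ℕ) - 1 - (b.1 : ℕ)) * B) pp b.2
          else if (b.1 : ℕ) = (t : ℕ) then D pp b.2 else 0) * ud ((b.1 : ℕ) + (j : ℕ)) b.2
        = (∑ s ∈ Finset.range (t : ℕ),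
            ((C * A ^ ((t : ℕ) - 1 - s) * B).mulVec (ud ((j : ℕ) + s))) pp)
          + (D.mulVec (ud ((t : ℕ) + (j : ℕ)))) pp := by
      rw [Fintype.sum_prod_type]
      dsimp only
      rw [Fin.sum_univ_eq_sum_range (fun s => ∑ q,
        (if s < (t : ℕ) then (C * A ^ ((t : ℕ) - 1 - s) * B) pp q
          else if s = (t : ℕ) then D pp q else 0) * ud (s + (j : ℕ)) q) L]
      rw [← Finset.sum_range_add_sum_Ico _ (show (t : ℕ) ≤ L from le_of_lt t.isLt)]
      congr 1
      · apply Finset.sum_congr rfl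
        intro s hs
        rw [Finset.mem_range] at hs
        rw [Matrix.mulVec, dotProduct]
        have : (j : ℕ) + s = s + (j : ℕ) := by omega
        rw [this]
        apply Finset.sum_congr rfl
        intro q _
        rw [if_pos hs]
      · rw [Finset.sum_eq_single (t : ℕ)]
        · rw [Matrix.mulVec, dotProduct]
          apply Finset.sum_congr rfl
          intro q _
          rw [if_neg (by omega), if_pos rfl]
        · intro s hs hne
          rw [Finset.mem_Ico] at hs
          apply Finset.sum_eq_zero
          intro q _
          rw [if_neg (by omega), if_neg hne, zero_mul]
        · intro habs
          exfalso
          exact habs (Finset.mem_Ico.mpr ⟨le_refl _, t.isLt⟩)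
    rw [hsum1]
    rw [Matrix.mulVec, dotProduct]
    ring
end main

/-- if `u^d` is persistently exciting of order `L + n` and the
data `(u^d, y^d)` is generated by a controllable minimal (observable over
`L ≥ ℓ` steps) LTI system of state dimension `n`, then the stacked Hankel
matrix `H_L(col(u^d, y^d))` has rank exactly `L m + n`. -/
theorem stmt13 {n m p T L : ℕ}
    (A : Matrix (Fin n) (Fin n) ℝ) (B : Matrix (Fin n) (Fin m) ℝ)
    (C : Matrix (Fin p) (Fin n) ℝ) (D : Matrix (Fin p) (Fin m) ℝ)
    (hctrb : (ctrbMat A B).rank = n)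
    (hobsL : (obsMat A C L).rank = n)
    (x : ℕ → Fin n → ℝ) (ud : ℕ → Fin m → ℝ) (yd : ℕ → Fin p → ℝ)
    (hx : ∀ t, x (t + 1) = A.mulVec (x t) + B.mulVec (ud t))
    (hy : ∀ t, yd t = C.mulVec (x t) + D.mulVec (ud t))
    (hpe : (hankel ud (L + n) (T - (L + n) + 1)).rank = (L + n) * m)
    (hLT : L + n ≤ T) :
    (Matrix.of fun (i : (Fin L × Fin m) ⊕ (Fin L × Fin p)) (j : Fin (T - L + 1)) =>
        Sum.elim (fun tm => ud ((tm.1 : ℕ) + (j : ℕ)) tm.2)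
          (fun tp => yd ((tp.1 : ℕ) + (j : ℕ)) tp.2) i).rank
      = L * m + n := by
  rw [fact A B C D x ud yd hx hy]
  set Nmat : Matrix ((Fin L × Fin m) ⊕ Fin n) (Fin (T - L + 1)) ℝ :=
    Matrix.of fun i (j : Fin (T - L + 1)) =>
      Sum.elim (fun tm : Fin L × Fin m => ud ((tm.1 : ℕ) + (j : ℕ)) tm.2)
        (fun r => x (j : ℕ) r) i with hNdef
  have hNtinj : Function.Injective (Nmatᵀ).mulVecLin := by
    rw [injective_iff_map_eq_zero]
    intro v hv
    have hv' : v ᵥ* Nmat = 0 := by simpa [Matrix.mulVecLin_apply] using hv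
    exact N_full_rank A B hctrb x ud hx hpe hLT v hv'
  have hrankN : Nmat.rank = Fintype.card ((Fin L × Fin m) ⊕ Fin n) := by
    rw [← Matrix.rank_transpose]
    exact rank_eq_card_of_inj _ hNtinj
  have hsurj := surj_of_rank_eq_card Nmat hrankN
  rw [rank_mul_of_surj _ _ hsurj, rank_eq_card_of_inj _ (Mmat_inj A B C D hobsL)]
  simp [Fintype.card_sum, Fintype.card_prod, mul_comm]
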